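/- Let A, B : H ⇉ H be maximally monotone operators with zer(A+B) ≠ ∅ and γ > 0. The Douglas–Rachford-type iteration y_n = J_{γB}(β_n x_n), z_n = J_{γA}(2y_n - β_n x_n), x_{n+1} = β_n x_n + λ_n(z_n - y_n), with parameters 0 < β_n ≤ 1, β_n → 1, ∑(1-β_n) = ∞, ∑|β_n - β_{n-1}| < ∞, 0 < λ_n ≤ 2, liminf λ_n > 0, ∑|λ_n - λ_{n-1}| < ∞, generates (x_n) converging strongly to x̄ := proj_{Fix(R_{γA}R_{γB})}(0), and (y_n), (z_n) both converge strongly to J_{γB}(x̄) ∈ zer(A+B). -/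

import Mathlib

open Filter Topology Pointwise RealInnerProductSpace

section
variable {H : Type*} [NormedAddCommGroup H] [InnerProductSpace ℝ H]

/-- A set-valued operator is monotone. -/
def MonotoneOp (A : H → Set H) : Prop :=
  ∀ x y u v : H, u ∈ A x → v ∈ A y → 0 ≤ ⟪x - y, u - v⟫

/-- A set-valued operator is maximally monotone. -/
def MaximallyMonotoneOp (A : H → Set H) : Prop :=
  MonotoneOp A ∧ ∀ x u : H, (∀ y v : H, v ∈ A y → 0 ≤ ⟪x - y, u - v⟫) → u ∈ A x

end

/- ### Auxiliary real-sequence lemmas -/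

private lemma prod_one_sub_tendsto_zero {t : ℕ → ℝ} (h0 : ∀ n, 0 ≤ t n) (h1 : ∀ n, t n ≤ 1)
    (hdiv : ¬ Summable t) :
    Tendsto (fun k => ∏ j ∈ Finset.range k, (1 - t j)) atTop (nhds 0) := by
  have hsum : Tendsto (fun k => ∑ j ∈ Finset.range k, t j) atTop atTop :=
    (not_summable_iff_tendsto_nat_atTop_of_nonneg h0).1 hdiv
  have hexp : Tendsto (fun k => Real.exp (-(∑ j ∈ Finset.range k, t j))) atTop (nhds 0) :=
    Real.tendsto_exp_atBot.comp (tendsto_neg_atTop_atBot.comp hsum)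
  refine squeeze_zero' (Eventually.of_forall fun k => ?_) (Eventually.of_forall fun k => ?_) hexp
  · exact Finset.prod_nonneg fun j _ => by linarith [h1 j]
  · calc ∏ j ∈ Finset.range k, (1 - t j) ≤ ∏ j ∈ Finset.range k, Real.exp (-(t j)) := by
          refine Finset.prod_le_prod (fun j _ => by linarith [h1 j]) (fun j _ => ?_)
          have := Real.add_one_le_exp (-(t j)); linarith
    _ = Real.exp (-(∑ j ∈ Finset.range k, t j)) := by
          rw [← Real.exp_sum, Finset.sum_neg_distrib]

private lemma xu_lemma {a t b c : ℕ → ℝ} (ha : ∀ n, 0 ≤ a n)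
    (ht0 : ∀ n, 0 ≤ t n) (ht1 : ∀ n, t n ≤ 1)
    (hrec : ∀ n, a (n + 1) ≤ (1 - t n) * a n + t n * b n + c n)
    (htdiv : ¬ Summable t)
    (hb : ∀ ε > (0:ℝ), ∀ᶠ n in atTop, b n ≤ ε)
    (hc0 : ∀ n, 0 ≤ c n) (hc : Summable c) :
    Tendsto a atTop (nhds 0) := by
  rw [Metric.tendsto_atTop]
  intro δ hδ
  set ε := δ / 4 with hε
  have hε0 : 0 < ε := by positivity
  obtain ⟨N1, hN1⟩ := (hb ε hε0).exists_forall_of_atTop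
  obtain ⟨N2, hN2⟩ : ∃ N2, ∀ m ≥ N2, ∑' k, c (k + m) ≤ ε :=
    ((tendsto_sum_nat_add c).eventually_le_const hε0).exists_forall_of_atTop
  set N := max N1 N2
  have hcN : Summable (fun k => c (k + N)) := (summable_nat_add_iff N).2 hc
  have hCle : ∑' k, c (k + N) ≤ ε := hN2 N (le_max_right _ _)
  have key : ∀ k, a (N + k) ≤ (∏ j ∈ Finset.range k, (1 - t (N + j))) * a N + ε
      + ∑ j ∈ Finset.range k, c (N + j) := by
    intro k
    induction k with
    | zero => simpa using by linarith [hε0.le]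
    | succ k ih =>
      have h1t : 0 ≤ 1 - t (N + k) := by linarith [ht1 (N + k)]
      have hbk : b (N + k) ≤ ε := hN1 _ (le_trans (le_max_left _ _) (Nat.le_add_right _ _))
      have hCk : 0 ≤ ∑ j ∈ Finset.range k, c (N + j) :=
        Finset.sum_nonneg fun j _ => hc0 _
      have := hrec (N + k)
      have hmul := mul_le_mul_of_nonneg_left ih h1t
      have htb : t (N + k) * b (N + k) ≤ t (N + k) * ε :=
        mul_le_mul_of_nonneg_left hbk (ht0 _)
      rw [show N + (k + 1) = N + k + 1 from rfl, Finset.prod_range_succ, Finset.sum_range_succ]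
      have hprodnn : 0 ≤ ∏ j ∈ Finset.range k, (1 - t (N + j)) :=
        Finset.prod_nonneg fun j _ => by linarith [ht1 (N + j)]
      have haN : 0 ≤ a N := ha N
      nlinarith [mul_nonneg hprodnn haN, ht0 (N + k), ht1 (N + k),
        mul_nonneg (ht0 (N + k)) hCk]
  have hsumle : ∀ k, ∑ j ∈ Finset.range k, c (N + j) ≤ ε := by
    intro k
    calc ∑ j ∈ Finset.range k, c (N + j) = ∑ j ∈ Finset.range k, c (j + N) := by
          simp [Nat.add_comm]
    _ ≤ ∑' k, c (k + N) := Summable.sum_le_tsum _ (fun i _ => hc0 _) hcN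
    _ ≤ ε := hCle
  have htN : ¬ Summable (fun j => t (N + j)) := by
    intro h; exact htdiv ((summable_nat_add_iff N).1 (by simpa [Nat.add_comm] using h))
  have hprod : Tendsto (fun k => (∏ j ∈ Finset.range k, (1 - t (N + j))) * a N) atTop (nhds 0) := by
    simpa using (prod_one_sub_tendsto_zero (fun j => ht0 _) (fun j => ht1 _) htN).mul_const (a N)
  obtain ⟨K, hK⟩ := (hprod.eventually_le_const hε0).exists_forall_of_atTop
  refine ⟨N + K, fun n hn => ?_⟩
  have hn' : a n ≤ 3 * ε := by
    obtain ⟨k, rfl⟩ : ∃ k, n = N + k := ⟨n - N, by omega⟩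
    have hk : K ≤ k := by omega
    have := key k
    have := hK k hk
    have := hsumle k
    linarith
  have : dist (a n) 0 = a n := by simp [abs_of_nonneg (ha n)]
  rw [this]; linarith

/- ### Weak sequential compactness of bounded sequences -/

section WeakBW
variable {H : Type*} [NormedAddCommGroup H] [InnerProductSpace ℝ H] [CompleteSpace H]

private lemma weak_bw (u : ℕ → H) (M : ℝ) (hu : ∀ n, ‖u n‖ ≤ M) :
    ∃ φ : ℕ → ℕ, StrictMono φ ∧ ∃ w : H,
      ∀ v : H, Tendsto (fun n => ⟪u (φ n), v⟫) atTop (nhds ⟪w, v⟫) := by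
  have hM0 : 0 ≤ M := le_trans (norm_nonneg _) (hu 0)
  set g : ℕ → ℕ → ℝ := fun n m => ⟪u n, u m⟫ with hg
  have hgmem : ∀ n, g n ∈ Set.univ.pi (fun _ : ℕ => Set.Icc (-(M*M)) (M*M)) := by
    intro n m _
    have h := abs_real_inner_le_norm (u n) (u m)
    have : ‖u n‖ * ‖u m‖ ≤ M * M :=
      mul_le_mul (hu n) (hu m) (norm_nonneg _) hM0
    constructor <;> [skip; skip] <;> cases' abs_le.1 (h.trans this) with h1 h2
    · exact h1
    · exact h2
  obtain ⟨A, -, φ, hφ, hconv⟩ :=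
    (isCompact_univ_pi (fun _ : ℕ => isCompact_Icc)).tendsto_subseq hgmem
  have hcoord : ∀ m, Tendsto (fun n => ⟪u (φ n), u m⟫) atTop (nhds (A m)) := by
    intro m
    exact (tendsto_pi_nhds.1 hconv m)
  set S : Submodule ℝ H := Submodule.span ℝ (Set.range u) with hS
  have hspan : ∀ v ∈ S, ∃ l, Tendsto (fun n => ⟪u (φ n), v⟫) atTop (nhds l) := by
    intro v hv
    induction hv using Submodule.span_induction with
    | mem v hv => obtain ⟨m, rfl⟩ := hv; exact ⟨A m, hcoord m⟩
    | zero => exact ⟨0, by simpa using tendsto_const_nhds⟩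
    | add v v' _ _ hl hl' =>
        obtain ⟨l, hl⟩ := hl; obtain ⟨l', hl'⟩ := hl'
        exact ⟨l + l', by simpa [inner_add_right] using hl.add hl'⟩
    | smul r v _ hl =>
        obtain ⟨l, hl⟩ := hl
        exact ⟨r * l, by simpa [real_inner_smul_right] using hl.const_mul r⟩
  set Sc : Submodule ℝ H := S.topologicalClosure with hSc
  have hScclosed : IsClosed (Sc : Set H) := Submodule.isClosed_topologicalClosure S
  have hclos : ∀ v ∈ Sc, ∃ l, Tendsto (fun n => ⟪u (φ n), v⟫) atTop (nhds l) := by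
    intro v hv
    have hcs : CauchySeq (fun n => ⟪u (φ n), v⟫) := by
      rw [Metric.cauchySeq_iff]
      intro ε hε
      have hδ : 0 < ε / (3 * (M + 1)) := by positivity
      obtain ⟨v', hv'S, hv'⟩ : ∃ v' ∈ (S : Set H), dist v v' < ε / (3 * (M + 1)) := by
        have : v ∈ closure (S : Set H) := hv
        exact Metric.mem_closure_iff.1 this _ hδ
      obtain ⟨l, hl⟩ := hspan v' hv'S
      have hcs' : CauchySeq (fun n => ⟪u (φ n), v'⟫) := hl.cauchySeq
      rw [Metric.cauchySeq_iff] at hcs'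
      obtain ⟨N, hN⟩ := hcs' (ε / 3) (by positivity)
      refine ⟨N, fun m hm n hn => ?_⟩
      have key : ∀ k, |⟪u (φ k), v⟫ - ⟪u (φ k), v'⟫| ≤ M * (ε / (3 * (M + 1))) := by
        intro k
        rw [← inner_sub_right]
        refine (abs_real_inner_le_norm _ _).trans ?_
        have : ‖v - v'‖ ≤ ε / (3 * (M + 1)) := by
          rw [← dist_eq_norm]; exact hv'.le
        exact mul_le_mul (hu _) this (norm_nonneg _) hM0
      have hMε : M * (ε / (3 * (M + 1))) ≤ ε / 3 := by
        rw [show M * (ε / (3 * (M + 1))) = M * ε / (3 * (M + 1)) by ring,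
          div_le_div_iff₀ (by positivity) (by norm_num : (0:ℝ) < 3)]
        nlinarith [hε.le]
      have h1 := key m; have h2 := key n
      have h3 := hN m hm n hn
      rw [Real.dist_eq] at h3 ⊢
      have : |⟪u (φ m), v⟫ - ⟪u (φ n), v⟫| ≤ |⟪u (φ m), v⟫ - ⟪u (φ m), v'⟫|
          + |⟪u (φ m), v'⟫ - ⟪u (φ n), v'⟫| + |⟪u (φ n), v'⟫ - ⟪u (φ n), v⟫| := by
        calc |⟪u (φ m), v⟫ - ⟪u (φ n), v⟫|
            = |(⟪u (φ m), v⟫ - ⟪u (φ m), v'⟫) + (⟪u (φ m), v'⟫ - ⟪u (φ n), v'⟫)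
              + (⟪u (φ n), v'⟫ - ⟪u (φ n), v⟫)| := by ring_nf
          _ ≤ _ := by
              refine (abs_add_le _ _).trans ?_
              gcongr
              exact abs_add_le _ _
      rw [abs_sub_comm (⟪u (φ n), v'⟫)] at this
      linarith
    obtain ⟨l, hl⟩ := cauchySeq_tendsto_of_complete hcs
    exact ⟨l, hl⟩
  haveI : CompleteSpace Sc := hScclosed.completeSpace_coe
  have hall : ∀ v : H, ∃ l, Tendsto (fun n => ⟪u (φ n), v⟫) atTop (nhds l) := by
    intro v
    obtain ⟨l, hl⟩ := hclos (Submodule.orthogonalProjection Sc v) (Submodule.orthogonalProjection Sc v).2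
    refine ⟨l, ?_⟩
    have huS : ∀ n, (u n : H) ∈ Sc := fun n =>
      Submodule.le_topologicalClosure S (Submodule.subset_span ⟨n, rfl⟩)
    have : ∀ n, ⟪u (φ n), v⟫ = ⟪u (φ n), (Submodule.orthogonalProjection Sc v : H)⟫ := by
      intro n
      have horth := Submodule.starProjection_inner_eq_zero v (u (φ n)) (huS (φ n))
      have : ⟪u (φ n), v - (Submodule.orthogonalProjection Sc v : H)⟫ = 0 := by
        rw [real_inner_comm]; exact horth
      rw [inner_sub_right] at this
      linarith
    simpa [this] using hl
  classical
  choose L hL using hall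
  have hLadd : ∀ v v', L (v + v') = L v + L v' := by
    intro v v'
    refine tendsto_nhds_unique (hL (v + v')) ?_
    simpa [inner_add_right] using (hL v).add (hL v')
  have hLsmul : ∀ (r : ℝ) v, L (r • v) = r * L v := by
    intro r v
    refine tendsto_nhds_unique (hL (r • v)) ?_
    simpa [real_inner_smul_right] using (hL v).const_mul r
  have hLbound : ∀ v, |L v| ≤ M * ‖v‖ := by
    intro v
    have : Tendsto (fun n => |⟪u (φ n), v⟫|) atTop (nhds |L v|) := (hL v).abs
    refine le_of_tendsto this (Eventually.of_forall fun n => ?_)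
    exact (abs_real_inner_le_norm _ _).trans
      (mul_le_mul_of_nonneg_right (hu _) (norm_nonneg _))
  let F : H →L[ℝ] ℝ := LinearMap.mkContinuous
    { toFun := L, map_add' := hLadd, map_smul' := hLsmul } M
    (fun v => by simpa using hLbound v)
  refine ⟨φ, hφ, (InnerProductSpace.toDual ℝ H).symm F, fun v => ?_⟩
  rw [InnerProductSpace.toDual_symm_apply]
  exact hL v

end WeakBW

/- ### Nonexpansive maps: convexity of the fixed set and demiclosedness -/

section Nonexp
variable {H : Type*} [NormedAddCommGroup H] [InnerProductSpace ℝ H]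

private lemma combo_norm_sq (t : ℝ) (a b : H) :
    ‖(1 - t) • a + t • b‖ ^ 2
      = (1 - t) * ‖a‖ ^ 2 + t * ‖b‖ ^ 2 - t * (1 - t) * ‖a - b‖ ^ 2 := by
  rw [norm_add_sq_real, norm_sub_sq_real, norm_smul, norm_smul,
    real_inner_smul_left, real_inner_smul_right, mul_pow, mul_pow,
    Real.norm_eq_abs, Real.norm_eq_abs, sq_abs, sq_abs]
  ring

private lemma fix_convex {T : H → H} (hT : ∀ a b, ‖T a - T b‖ ≤ ‖a - b‖) {p q : H}
    (hp : T p = p) (hq : T q = q) {t : ℝ} (ht0 : 0 ≤ t) (ht1 : t ≤ 1) :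
    T ((1 - t) • p + t • q) = (1 - t) • p + t • q := by
  set m := (1 - t) • p + t • q with hm
  have hmp : m - p = t • (q - p) := by rw [hm]; module
  have hmq : m - q = (1 - t) • (p - q) := by rw [hm]; module
  have h1 : ‖T m - p‖ ≤ t * ‖q - p‖ := by
    calc ‖T m - p‖ = ‖T m - T p‖ := by rw [hp]
      _ ≤ ‖m - p‖ := hT m p
      _ = t * ‖q - p‖ := by rw [hmp, norm_smul]; simp [abs_of_nonneg ht0]
  have h2 : ‖T m - q‖ ≤ (1 - t) * ‖p - q‖ := by
    calc ‖T m - q‖ = ‖T m - T q‖ := by rw [hq]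
      _ ≤ ‖m - q‖ := hT m q
      _ = (1 - t) * ‖p - q‖ := by
          rw [hmq, norm_smul]; simp [abs_of_nonneg (by linarith : (0:ℝ) ≤ 1 - t)]
  have hkey : ‖T m - m‖ ^ 2
      = (1 - t) * ‖T m - p‖ ^ 2 + t * ‖T m - q‖ ^ 2 - t * (1 - t) * ‖q - p‖ ^ 2 := by
    have := combo_norm_sq t (T m - p) (T m - q)
    have he : (1 - t) • (T m - p) + t • (T m - q) = T m - m := by rw [hm]; module
    have he2 : T m - p - (T m - q) = q - p := by abel
    rw [he, he2] at this
    exact this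
  have h1' : ‖T m - p‖ ^ 2 ≤ t ^ 2 * ‖q - p‖ ^ 2 := by
    have := pow_le_pow_left₀ (norm_nonneg _) h1 2
    calc ‖T m - p‖ ^ 2 ≤ (t * ‖q - p‖) ^ 2 := this
      _ = t ^ 2 * ‖q - p‖ ^ 2 := by ring
  have h2' : ‖T m - q‖ ^ 2 ≤ (1 - t) ^ 2 * ‖q - p‖ ^ 2 := by
    have := pow_le_pow_left₀ (norm_nonneg _) h2 2
    calc ‖T m - q‖ ^ 2 ≤ ((1 - t) * ‖p - q‖) ^ 2 := this
      _ = (1 - t) ^ 2 * ‖q - p‖ ^ 2 := by rw [norm_sub_rev q p]; ring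
  have hzero : ‖T m - m‖ ^ 2 ≤ 0 := by
    rw [hkey]; nlinarith [sq_nonneg (‖q - p‖)]
  have : ‖T m - m‖ = 0 := by
    nlinarith [norm_nonneg (T m - m), sq_nonneg (‖T m - m‖)]
  have := norm_sub_eq_zero_iff.1 this
  rw [this]

private lemma demiclosed {T : H → H} (hT : ∀ a b, ‖T a - T b‖ ≤ ‖a - b‖)
    (u : ℕ → H) (w : H) (M : ℝ) (hbd : ∀ n, ‖u n‖ ≤ M)
    (hw : ∀ v : H, Tendsto (fun n => ⟪u n, v⟫) atTop (nhds ⟪w, v⟫))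
    (hres : Tendsto (fun n => ‖T (u n) - u n‖) atTop (nhds 0)) :
    T w = w := by
  set e : ℕ → ℝ := fun n => ‖T (u n) - u n‖ with he
  have hkey : ∀ n, ‖w - T w‖ ^ 2
      ≤ e n ^ 2 + 2 * e n * ‖u n - w‖ - 2 * ⟪u n - w, w - T w⟫ := by
    intro n
    have h1 : ‖u n - T w‖ ≤ e n + ‖u n - w‖ := by
      calc ‖u n - T w‖ ≤ ‖u n - T (u n)‖ + ‖T (u n) - T w‖ :=
            norm_sub_le_norm_sub_add_norm_sub _ _ _
        _ ≤ e n + ‖u n - w‖ := by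
            have h5 : ‖u n - T (u n)‖ = e n := by rw [he, norm_sub_rev]
            linarith [hT (u n) w, h5.le, h5.ge]
    have h2 : ‖u n - T w‖ ^ 2 = ‖u n - w‖ ^ 2 + 2 * ⟪u n - w, w - T w⟫ + ‖w - T w‖ ^ 2 := by
      have : u n - T w = (u n - w) + (w - T w) := by abel
      rw [this, norm_add_sq_real]
    have h3 : ‖u n - T w‖ ^ 2 ≤ (e n + ‖u n - w‖) ^ 2 :=
      pow_le_pow_left₀ (norm_nonneg _) h1 2
    nlinarith
  have hlim : Tendsto (fun n => e n ^ 2 + 2 * e n * ‖u n - w‖ - 2 * ⟪u n - w, w - T w⟫)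
      atTop (nhds 0) := by
    have h1 : Tendsto (fun n => e n ^ 2) atTop (nhds 0) := by
      simpa using hres.pow 2
    have hb : ∀ n, |2 * e n * ‖u n - w‖| ≤ 2 * e n * (M + ‖w‖) := by
      intro n
      have he0 : 0 ≤ e n := norm_nonneg _
      have : ‖u n - w‖ ≤ M + ‖w‖ := (norm_sub_le _ _).trans (by linarith [hbd n])
      rw [abs_of_nonneg (by positivity)]
      have := mul_le_mul_of_nonneg_left this (by positivity : (0:ℝ) ≤ 2 * e n)
      linarith
    have h2 : Tendsto (fun n => 2 * e n * ‖u n - w‖) atTop (nhds 0) := by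
      have habs : Tendsto (fun n => 2 * e n * (M + ‖w‖)) atTop (nhds 0) := by
        simpa using (hres.const_mul 2).mul_const (M + ‖w‖)
      exact squeeze_zero_norm (fun n => hb n) habs
    have h3 : Tendsto (fun n => 2 * ⟪u n - w, w - T w⟫) atTop (nhds 0) := by
      have h6 : Tendsto (fun n => ⟪u n - w, w - T w⟫) atTop (nhds 0) := by
        have h4 := hw (w - T w)
        have h7 : ∀ n, ⟪u n - w, w - T w⟫ = ⟪u n, w - T w⟫ - ⟪w, w - T w⟫ := by
          intro n; rw [inner_sub_left]
        simp only [h7]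
        simpa using h4.sub_const (⟪w, w - T w⟫)
      simpa using h6.const_mul 2
    have := (h1.add h2).sub h3
    simpa using this
  have : ‖w - T w‖ ^ 2 ≤ 0 := ge_of_tendsto hlim (Eventually.of_forall hkey)
  have hnz : ‖w - T w‖ = 0 := by
    nlinarith [norm_nonneg (w - T w), sq_nonneg (‖w - T w‖)]
  have := norm_sub_eq_zero_iff.1 hnz
  rw [← this]

end Nonexp

/- ### Resolvents of monotone operators -/

section Resolvent
variable {H : Type*} [NormedAddCommGroup H] [InnerProductSpace ℝ H]

private lemma resolvent_firm {A : H → Set H} (hA : MonotoneOp A) {γ : ℝ} (hγ : 0 < γ)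
    {J : H → H} (hJ : ∀ x : H, x - J x ∈ γ • A (J x)) (u v : H) :
    ‖J u - J v‖ ^ 2 ≤ ⟪u - v, J u - J v⟫ := by
  obtain ⟨a, haA, hae⟩ := Set.mem_smul_set.1 (hJ u)
  obtain ⟨b, hbB, hbe⟩ := Set.mem_smul_set.1 (hJ v)
  have hmono := hA _ _ _ _ haA hbB
  have h1 : u - v = (J u - J v) + ((u - J u) - (v - J v)) := by abel
  have h2 : (u - J u) - (v - J v) = γ • (a - b) := by rw [smul_sub, hae, hbe]
  rw [h1, inner_add_left, h2, real_inner_smul_left]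
  have h3 : 0 ≤ ⟪a - b, J u - J v⟫ := by rw [real_inner_comm]; exact hmono
  have h4 : ⟪J u - J v, J u - J v⟫ = ‖J u - J v‖ ^ 2 := real_inner_self_eq_norm_sq _
  nlinarith [mul_nonneg hγ.le h3]

private lemma resolvent_nonexp {A : H → Set H} (hA : MonotoneOp A) {γ : ℝ} (hγ : 0 < γ)
    {J : H → H} (hJ : ∀ x : H, x - J x ∈ γ • A (J x)) (u v : H) :
    ‖J u - J v‖ ≤ ‖u - v‖ := by
  have hf := resolvent_firm hA hγ hJ u v
  have hcs := real_inner_le_norm (u - v) (J u - J v)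
  rcases eq_or_lt_of_le (norm_nonneg (J u - J v)) with h | h
  · rw [← h]; exact norm_nonneg _
  · exact le_of_mul_le_mul_right (by nlinarith) h

private lemma reflect_nonexp {A : H → Set H} (hA : MonotoneOp A) {γ : ℝ} (hγ : 0 < γ)
    {J : H → H} (hJ : ∀ x : H, x - J x ∈ γ • A (J x)) (u v : H) :
    ‖((2:ℝ) • J u - u) - ((2:ℝ) • J v - v)‖ ≤ ‖u - v‖ := by
  have hf := resolvent_firm hA hγ hJ u v
  have hid : ((2:ℝ) • J u - u) - ((2:ℝ) • J v - v) = (2:ℝ) • (J u - J v) - (u - v) := by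
    module
  have hsq : ‖((2:ℝ) • J u - u) - ((2:ℝ) • J v - v)‖ ^ 2 ≤ ‖u - v‖ ^ 2 := by
    rw [hid, norm_sub_sq_real, real_inner_smul_left, norm_smul]
    have hcm : ⟪J u - J v, u - v⟫ = ⟪u - v, J u - J v⟫ := real_inner_comm _ _
    rw [hcm]
    simp only [Real.norm_ofNat]
    nlinarith
  exact le_of_pow_le_pow_left₀ (by norm_num) (norm_nonneg _) hsq

end Resolvent

set_option maxHeartbeats 2000000 in
/-- Strong convergence of the Douglas–Rachford algorithm with Tikhonov
regularization terms: with `JA, JB` the resolvents of `γ A` and `γ B` and the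
iteration `y n = JB (β n • x n)`, `z n = JA (2 • y n - β n • x n)`,
`x (n+1) = β n • x n + λ n • (z n - y n)`, the sequence `(x n)` converges
strongly to the minimal norm fixed point `x̄` of the composition of reflected
resolvents `R_{γA} ∘ R_{γB}`, while `(y n)` and `(z n)` converge strongly to
`JB x̄`, which is a zero of `A + B`. -/
theorem douglasRachford_tikhonov_strong_convergence
    {H : Type*} [NormedAddCommGroup H] [InnerProductSpace ℝ H] [CompleteSpace H]
    (A B : H → Set H) (hA : MaximallyMonotoneOp A) (hB : MaximallyMonotoneOp B)
    (γ : ℝ) (hγ : 0 < γ)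
    (JA JB : H → H)
    (hJA : ∀ x : H, x - JA x ∈ γ • A (JA x))
    (hJB : ∀ x : H, x - JB x ∈ γ • B (JB x))
    (hzer_ne : {z : H | ∃ a ∈ A z, -a ∈ B z}.Nonempty)
    (β lam : ℕ → ℝ)
    (hβ : ∀ n, 0 < β n ∧ β n ≤ 1)
    (hβlim : Tendsto β atTop (nhds 1))
    (hβdiv : ¬ Summable (fun n => 1 - β n))
    (hβvar : Summable (fun n => |β (n + 1) - β n|))
    (hlam : ∀ n, 0 < lam n ∧ lam n ≤ 2)
    (hlaminf : 0 < Filter.liminf lam Filter.atTop)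
    (hlamvar : Summable (fun n => |lam (n + 1) - lam n|))
    (x y z : ℕ → H)
    (hy : ∀ n, y n = JB (β n • x n))
    (hz : ∀ n, z n = JA ((2 : ℝ) • y n - β n • x n))
    (hx : ∀ n, x (n + 1) = β n • x n + lam n • (z n - y n))
    (xbar : H)
    (hxbar : ((2 : ℝ) • JA ((2 : ℝ) • JB xbar - xbar) - ((2 : ℝ) • JB xbar - xbar)) = xbar)
    (hxbarmin : ∀ q : H,
      ((2 : ℝ) • JA ((2 : ℝ) • JB q - q) - ((2 : ℝ) • JB q - q)) = q → ‖xbar‖ ≤ ‖q‖) :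
    Tendsto x atTop (nhds xbar) ∧
      Tendsto y atTop (nhds (JB xbar)) ∧
      Tendsto z atTop (nhds (JB xbar)) ∧
      (∃ a ∈ A (JB xbar), -a ∈ B (JB xbar)) := by
  classical
  obtain ⟨hAmono, -⟩ := hA
  obtain ⟨hBmono, -⟩ := hB
  set RB : H → H := fun v => (2:ℝ) • JB v - v with hRBdef
  set T : H → H := fun v => (2:ℝ) • JA (RB v) - RB v with hTdef
  have hTfix : T xbar = xbar := hxbar
  have hJBne : ∀ u v : H, ‖JB u - JB v‖ ≤ ‖u - v‖ := resolvent_nonexp hBmono hγ hJB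
  have hJAne : ∀ u v : H, ‖JA u - JA v‖ ≤ ‖u - v‖ := resolvent_nonexp hAmono hγ hJA
  have hRBne : ∀ u v : H, ‖RB u - RB v‖ ≤ ‖u - v‖ := reflect_nonexp hBmono hγ hJB
  have hTne : ∀ u v : H, ‖T u - T v‖ ≤ ‖u - v‖ := fun u v =>
    (reflect_nonexp hAmono hγ hJA (RB u) (RB v)).trans (hRBne u v)
  -- the fixed point equation gives `JA (RB xbar) = JB xbar`
  have hp2 : (2:ℝ) • JA (RB xbar) = (2:ℝ) • JB xbar := by
    have h3 : (2:ℝ) • JA (RB xbar) - RB xbar = xbar := hxbar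
    have h4 : RB xbar = (2:ℝ) • JB xbar - xbar := rfl
    rw [h4] at h3
    have h5 := eq_add_of_sub_eq h3
    rw [h5]; abel
  have hJAp : JA (RB xbar) = JB xbar :=
    smul_right_injective H (by norm_num : (2:ℝ) ≠ 0) hp2
  -- `JB xbar` is a zero of `A + B`
  have hzer : ∃ a ∈ A (JB xbar), -a ∈ B (JB xbar) := by
    obtain ⟨a0, ha0, ha0e⟩ := Set.mem_smul_set.1 (hJA (RB xbar))
    obtain ⟨b0, hb0, hb0e⟩ := Set.mem_smul_set.1 (hJB xbar)
    rw [hJAp] at ha0 ha0e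
    have hsum : γ • a0 + γ • b0 = 0 := by
      rw [ha0e, hb0e]
      have h4 : RB xbar = (2:ℝ) • JB xbar - xbar := rfl
      rw [h4]; module
    have hab : a0 + b0 = 0 := by
      rw [← smul_add] at hsum
      exact (smul_eq_zero.1 hsum).resolve_left (ne_of_gt hγ)
    refine ⟨a0, ha0, ?_⟩
    have h6 : a0 = -b0 := add_eq_zero_iff_eq_neg.1 hab
    rw [h6, neg_neg]; exact hb0
  -- iteration in terms of `T`
  set w : ℕ → H := fun n => β n • x n with hwdef
  have hstep : ∀ n, x (n + 1) = w n + (lam n / 2) • (T (w n) - w n) := by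
    intro n
    have hyz : z n - y n = JA (RB (w n)) - JB (w n) := by
      rw [hz n, hy n]
    have hT2 : T (w n) - w n = (2:ℝ) • (z n - y n) := by
      rw [hyz]
      show (2:ℝ) • JA (RB (w n)) - RB (w n) - w n = (2:ℝ) • (JA (RB (w n)) - JB (w n))
      have h4 : RB (w n) = (2:ℝ) • JB (w n) - w n := rfl
      rw [h4]; module
    rw [hx n, hT2, smul_smul, div_mul_cancel₀ _ (two_ne_zero)]
  set F : ℝ → H → H := fun l u => u + (l / 2) • (T u - u) with hFdef
  have hstepF : ∀ n, x (n + 1) = F (lam n) (w n) := hstep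
  have hFne : ∀ l : ℝ, 0 ≤ l → l ≤ 2 → ∀ u u' : H, ‖F l u - F l u'‖ ≤ ‖u - u'‖ := by
    intro l hl0 hl2 u u'
    have hid : F l u - F l u' = (1 - l / 2) • (u - u') + (l / 2) • (T u - T u') := by
      show u + (l/2) • (T u - u) - (u' + (l/2) • (T u' - u')) = _
      module
    rw [hid]
    refine (norm_add_le _ _).trans ?_
    rw [norm_smul, norm_smul, Real.norm_eq_abs, Real.norm_eq_abs,
      abs_of_nonneg (by linarith : (0:ℝ) ≤ 1 - l/2), abs_of_nonneg (by linarith : (0:ℝ) ≤ l/2)]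
    have h7 := hTne u u'
    nlinarith [norm_nonneg (u - u')]
  have hFshift : ∀ l l' : ℝ, ∀ u : H, ‖F l u - F l' u‖ = |l - l'| / 2 * ‖T u - u‖ := by
    intro l l' u
    have hid : F l u - F l' u = ((l - l') / 2) • (T u - u) := by
      show u + (l/2) • (T u - u) - (u + (l'/2) • (T u - u)) = ((l - l') / 2) • (T u - u)
      module
    rw [hid, norm_smul, Real.norm_eq_abs, abs_div, abs_two]
  -- boundedness
  set M0 : ℝ := max ‖x 0 - xbar‖ ‖xbar‖ with hM0def
  have hxbarM0 : ‖xbar‖ ≤ M0 := le_max_right _ _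
  have hM0nn : 0 ≤ M0 := le_trans (norm_nonneg _) hxbarM0
  have hwx : ∀ n, ‖w n - xbar‖ ≤ β n * ‖x n - xbar‖ + (1 - β n) * ‖xbar‖ := by
    intro n
    have hid : w n - xbar = β n • (x n - xbar) + (1 - β n) • (-xbar) := by
      show β n • x n - xbar = _; module
    rw [hid]
    refine (norm_add_le _ _).trans ?_
    rw [norm_smul, norm_smul, norm_neg, Real.norm_eq_abs, Real.norm_eq_abs,
      abs_of_nonneg (hβ n).1.le, abs_of_nonneg (by linarith [(hβ n).2] : (0:ℝ) ≤ 1 - β n)]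
  have hFxbar : ∀ l : ℝ, F l xbar = xbar := by
    intro l
    show xbar + (l/2) • (T xbar - xbar) = xbar
    rw [hTfix]; simp
  have hcontract : ∀ n, ‖x (n+1) - xbar‖ ≤ ‖w n - xbar‖ := by
    intro n
    have h1 := hFne (lam n) (hlam n).1.le (hlam n).2 (w n) xbar
    rw [hFxbar] at h1
    rw [hstepF n]; exact h1
  have hxbd : ∀ n, ‖x n - xbar‖ ≤ M0 := by
    intro n; induction n with
    | zero => exact le_max_left _ _
    | succ n ih =>
      refine (hcontract n).trans ((hwx n).trans ?_)
      have h1 := (hβ n).1.le; have h2 := (hβ n).2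
      have h3 := mul_le_mul_of_nonneg_left ih h1
      have h4 := mul_le_mul_of_nonneg_left hxbarM0 (by linarith : (0:ℝ) ≤ 1 - β n)
      linarith
  have hwbd : ∀ n, ‖w n - xbar‖ ≤ M0 := by
    intro n
    refine (hwx n).trans ?_
    have h1 := (hβ n).1.le; have h2 := (hβ n).2
    have h3 := mul_le_mul_of_nonneg_left (hxbd n) h1
    have h4 := mul_le_mul_of_nonneg_left hxbarM0 (by linarith : (0:ℝ) ≤ 1 - β n)
    linarith
  set M : ℝ := M0 + ‖xbar‖ with hMdef
  have hMnn : 0 ≤ M := by positivity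
  have hxM : ∀ n, ‖x n‖ ≤ M := by
    intro n
    calc ‖x n‖ = ‖(x n - xbar) + xbar‖ := by rw [sub_add_cancel]
      _ ≤ ‖x n - xbar‖ + ‖xbar‖ := norm_add_le _ _
      _ ≤ M := by have := hxbd n; rw [hMdef]; linarith
  have hwM : ∀ n, ‖w n‖ ≤ M := by
    intro n
    calc ‖w n‖ = ‖(w n - xbar) + xbar‖ := by rw [sub_add_cancel]
      _ ≤ ‖w n - xbar‖ + ‖xbar‖ := norm_add_le _ _
      _ ≤ M := by have := hwbd n; rw [hMdef]; linarith
  have hTwbd : ∀ n, ‖T (w n) - w n‖ ≤ 2 * M0 := by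
    intro n
    have h1 : ‖T (w n) - xbar‖ ≤ ‖w n - xbar‖ := by
      have := hTne (w n) xbar; rwa [hTfix] at this
    have h2 : ‖T (w n) - w n‖ ≤ ‖T (w n) - xbar‖ + ‖xbar - w n‖ :=
      norm_sub_le_norm_sub_add_norm_sub _ _ _
    have h3 : ‖xbar - w n‖ = ‖w n - xbar‖ := norm_sub_rev _ _
    have := hwbd n
    linarith
  -- successive differences tend to zero
  have hxdiff : Tendsto (fun n => ‖x (n + 1) - x n‖) atTop (nhds 0) := by
    have hrec : ∀ k, ‖x (k + 1 + 1) - x (k + 1)‖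
        ≤ (1 - (1 - β (k + 1))) * ‖x (k + 1) - x k‖ + (1 - β (k + 1)) * 0
          + (|β (k + 1) - β k| * M + |lam (k + 1) - lam k| * M0) := by
      intro k
      have h1 : ‖x (k + 1 + 1) - x (k + 1)‖
          ≤ ‖F (lam (k+1)) (w (k+1)) - F (lam (k+1)) (w k)‖
            + ‖F (lam (k+1)) (w k) - F (lam k) (w k)‖ := by
        rw [hstepF (k+1), hstepF k]
        exact norm_sub_le_norm_sub_add_norm_sub _ _ _
      have h2 : ‖F (lam (k+1)) (w (k+1)) - F (lam (k+1)) (w k)‖ ≤ ‖w (k+1) - w k‖ :=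
        hFne _ (hlam _).1.le (hlam _).2 _ _
      have h3 : ‖w (k+1) - w k‖ ≤ β (k+1) * ‖x (k+1) - x k‖ + |β (k+1) - β k| * ‖x k‖ := by
        have hid : w (k+1) - w k = β (k+1) • (x (k+1) - x k) + (β (k+1) - β k) • x k := by
          show β (k+1) • x (k+1) - β k • x k = _; module
        rw [hid]
        refine (norm_add_le _ _).trans ?_
        rw [norm_smul, norm_smul, Real.norm_eq_abs, Real.norm_eq_abs,
          abs_of_nonneg (hβ _).1.le]
      have h4 : ‖F (lam (k+1)) (w k) - F (lam k) (w k)‖ ≤ |lam (k+1) - lam k| * M0 := by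
        rw [hFshift]
        calc |lam (k+1) - lam k| / 2 * ‖T (w k) - w k‖
            ≤ |lam (k+1) - lam k| / 2 * (2 * M0) := by
              exact mul_le_mul_of_nonneg_left (hTwbd k) (by positivity)
          _ = |lam (k+1) - lam k| * M0 := by ring
      have h5 : |β (k+1) - β k| * ‖x k‖ ≤ |β (k+1) - β k| * M :=
        mul_le_mul_of_nonneg_left (hxM k) (abs_nonneg _)
      linarith
    refine xu_lemma (fun n => norm_nonneg _) (fun n => by linarith [(hβ (n+1)).2])
      (fun n => by linarith [(hβ (n+1)).1]) hrec ?_ ?_ ?_ ?_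
    · intro h
      exact hβdiv ((summable_nat_add_iff 1).1 h)
    · exact fun ε hε => Eventually.of_forall fun n => hε.le
    · intro n; positivity
    · exact (hβvar.mul_right M).add (hlamvar.mul_right M0)
  have h1mb : Tendsto (fun n => 1 - β n) atTop (nhds 0) := by
    simpa using (tendsto_const_nhds (x := (1:ℝ))).sub hβlim
  have hxw : Tendsto (fun n => ‖x (n + 1) - w n‖) atTop (nhds 0) := by
    have hbound : ∀ n, ‖x (n + 1) - w n‖ ≤ ‖x (n + 1) - x n‖ + (1 - β n) * M := by
      intro n
      have hid : x (n + 1) - w n = (x (n + 1) - x n) + (1 - β n) • x n := by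
        show x (n + 1) - β n • x n = _; module
      rw [hid]
      refine (norm_add_le _ _).trans ?_
      rw [norm_smul, Real.norm_eq_abs, abs_of_nonneg (by linarith [(hβ n).2] : (0:ℝ) ≤ 1 - β n)]
      have := mul_le_mul_of_nonneg_left (hxM n) (by linarith [(hβ n).2] : (0:ℝ) ≤ 1 - β n)
      linarith
    refine squeeze_zero' (Eventually.of_forall fun n => norm_nonneg _)
      (Eventually.of_forall hbound) ?_
    simpa using hxdiff.add (h1mb.mul_const M)
  -- residuals tend to zero
  set δ : ℝ := liminf lam atTop / 2 with hδdef
  have hδ0 : 0 < δ := by positivity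
  have hbddlam : IsBoundedUnder (· ≥ ·) atTop lam :=
    isBoundedUnder_of ⟨0, fun n => (hlam n).1.le⟩
  have hev : ∀ᶠ n in atTop, δ < lam n :=
    eventually_lt_of_lt_liminf (by rw [hδdef]; linarith) hbddlam
  have hTwn : Tendsto (fun n => ‖T (w n) - w n‖) atTop (nhds 0) := by
    refine squeeze_zero' (g := fun n => 2 / δ * ‖x (n + 1) - w n‖)
      (Eventually.of_forall fun n => norm_nonneg _)
      (hev.mono fun n hn => ?_) ?_
    · have heq : ‖x (n + 1) - w n‖ = lam n / 2 * ‖T (w n) - w n‖ := by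
        rw [hstep n, add_sub_cancel_left, norm_smul, Real.norm_eq_abs,
          abs_of_nonneg (by linarith [(hlam n).1] : (0:ℝ) ≤ lam n / 2)]
      show ‖T (w n) - w n‖ ≤ 2 / δ * ‖x (n + 1) - w n‖
      rw [heq]
      have hc := norm_nonneg (T (w n) - w n)
      have h8 : δ * ‖T (w n) - w n‖ ≤ lam n * ‖T (w n) - w n‖ :=
        mul_le_mul_of_nonneg_right hn.le hc
      have h9 : 2 / δ * (lam n / 2 * ‖T (w n) - w n‖) = lam n * ‖T (w n) - w n‖ / δ := by
        field_simp
      rw [h9, le_div_iff₀ hδ0]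
      linarith [mul_comm (‖T (w n) - w n‖) δ]
    · simpa using hxw.const_mul (2 / δ)
  -- the key limsup estimate via weak compactness
  have hlimsupIneq : ∀ ε > (0:ℝ), ∀ᶠ n in atTop, ⟪-xbar, w n - xbar⟫ ≤ ε := by
    intro ε hε
    by_contra hcon
    rw [Filter.not_eventually] at hcon
    have hfreq : ∃ᶠ n in atTop, ε < ⟪-xbar, w n - xbar⟫ := hcon.mono fun n hn => not_le.1 hn
    obtain ⟨φ0, hφ0, hφ0p⟩ := Filter.extraction_of_frequently_atTop hfreq
    obtain ⟨ψ, hψ, winf, hweak⟩ := weak_bw (fun k => w (φ0 k)) M (fun k => hwM _)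
    have hweak' : ∀ v : H, Tendsto (fun k => ⟪w (φ0 (ψ k)), v⟫) atTop (nhds ⟪winf, v⟫) := hweak
    have hres : Tendsto (fun k => ‖T (w (φ0 (ψ k))) - w (φ0 (ψ k))‖) atTop (nhds 0) :=
      hTwn.comp ((hφ0.comp hψ).tendsto_atTop)
    have hfixw : T winf = winf :=
      demiclosed hTne (fun k => w (φ0 (ψ k))) winf M (fun k => hwM _) hweak' hres
    have hVI : ⟪-xbar, winf - xbar⟫ ≤ 0 := by
      have hineq : ∀ t : ℝ, 0 < t → t ≤ 1 →
          ⟪-xbar, winf - xbar⟫ ≤ t / 2 * ‖winf - xbar‖ ^ 2 := by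
        intro t ht0 ht1
        have hfixm := fix_convex hTne hTfix hfixw ht0.le ht1
        have h := hxbarmin _ hfixm
        have hsq : ‖xbar‖ ^ 2 ≤ ‖(1 - t) • xbar + t • winf‖ ^ 2 :=
          pow_le_pow_left₀ (norm_nonneg _) h 2
        have hid : (1 - t) • xbar + t • winf = xbar + t • (winf - xbar) := by module
        rw [hid, norm_add_sq_real, real_inner_smul_right, norm_smul,
          Real.norm_eq_abs, abs_of_nonneg ht0.le] at hsq
        have hiner : ⟪-xbar, winf - xbar⟫ = -⟪xbar, winf - xbar⟫ := by
          rw [inner_neg_left]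
        rw [hiner]
        nlinarith [sq_nonneg ‖winf - xbar‖]
      have hlim' : Tendsto (fun n : ℕ => (1/((n:ℝ)+1)) / 2 * ‖winf - xbar‖ ^ 2)
          atTop (nhds 0) := by
        simpa using (tendsto_one_div_add_atTop_nhds_zero_nat.div_const 2).mul_const
          (‖winf - xbar‖ ^ 2)
      refine ge_of_tendsto hlim' (Eventually.of_forall fun n => ?_)
      refine hineq _ (by positivity) ?_
      rw [div_le_one (by positivity)]
      have : (0:ℝ) ≤ (n:ℝ) := Nat.cast_nonneg n
      linarith
    have hlimit : Tendsto (fun k => ⟪-xbar, w (φ0 (ψ k)) - xbar⟫) atTop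
        (nhds ⟪-xbar, winf - xbar⟫) := by
      have h1 := hweak' (-xbar)
      have hrw : ∀ k, ⟪-xbar, w (φ0 (ψ k)) - xbar⟫ = ⟪w (φ0 (ψ k)), -xbar⟫ - ⟪xbar, -xbar⟫ := by
        intro k; rw [real_inner_comm, inner_sub_left]
      have hrw2 : ⟪-xbar, winf - xbar⟫ = ⟪winf, -xbar⟫ - ⟪xbar, -xbar⟫ := by
        rw [real_inner_comm, inner_sub_left]
      simp only [hrw, hrw2]
      exact h1.sub_const _
    have hcontr : ε ≤ ⟪-xbar, winf - xbar⟫ :=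
      ge_of_tendsto hlimit (Eventually.of_forall fun k => (hφ0p (ψ k)).le)
    linarith
  -- strong convergence of x via Xu's lemma
  have hxsq : Tendsto (fun n => ‖x n - xbar‖ ^ 2) atTop (nhds 0) := by
    refine xu_lemma (a := fun n => ‖x n - xbar‖ ^ 2)
      (t := fun n => (1 - β n) * (1 + β n))
      (b := fun n => 2 * ⟪-xbar, w n - xbar⟫ / (1 + β n))
      (c := fun n => 0) (fun n => sq_nonneg _) ?_ ?_ ?_ ?_ ?_ ?_ ?_
    · intro n
      exact mul_nonneg (by linarith [(hβ n).2]) (by linarith [(hβ n).1])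
    · intro n
      show (1 - β n) * (1 + β n) ≤ 1
      nlinarith [(hβ n).1, (hβ n).2]
    · intro n
      beta_reduce
      have h1 := hcontract n
      have hsq1 : ‖x (n+1) - xbar‖ ^ 2 ≤ ‖w n - xbar‖ ^ 2 :=
        pow_le_pow_left₀ (norm_nonneg _) h1 2
      have hkey : ‖w n - xbar‖ ^ 2
          ≤ (β n) ^ 2 * ‖x n - xbar‖ ^ 2 + 2 * (1 - β n) * ⟪-xbar, w n - xbar⟫ := by
        have hid : w n - xbar = β n • (x n - xbar) + (1 - β n) • (-xbar) := by
          show β n • x n - xbar = _; module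
        have hexp : ‖w n - xbar‖ ^ 2 = ‖β n • (x n - xbar)‖ ^ 2
            + 2 * ⟪β n • (x n - xbar), (1 - β n) • (-xbar)⟫
            + ‖(1 - β n) • (-xbar)‖ ^ 2 := by
          conv_lhs => rw [hid]
          rw [norm_add_sq_real]
        have hv : ⟪(1 - β n) • (-xbar), w n - xbar⟫
            = ⟪β n • (x n - xbar), (1 - β n) • (-xbar)⟫ + ‖(1 - β n) • (-xbar)‖ ^ 2 := by
          conv_lhs => rw [hid]
          rw [inner_add_right, real_inner_comm, real_inner_self_eq_norm_sq]
        have hvv : ⟪(1 - β n) • (-xbar), w n - xbar⟫ = (1 - β n) * ⟪-xbar, w n - xbar⟫ :=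
          real_inner_smul_left _ _ _
        have hnu : ‖β n • (x n - xbar)‖ ^ 2 = (β n) ^ 2 * ‖x n - xbar‖ ^ 2 := by
          rw [norm_smul, Real.norm_eq_abs, mul_pow, sq_abs]
        nlinarith [sq_nonneg ‖(1 - β n) • (-xbar)‖]
      have h1β : (0:ℝ) < 1 + β n := by linarith [(hβ n).1]
      have hfinal : (1 - (1 - β n) * (1 + β n)) * ‖x n - xbar‖ ^ 2
          + ((1 - β n) * (1 + β n)) * (2 * ⟪-xbar, w n - xbar⟫ / (1 + β n)) + 0
          = (β n) ^ 2 * ‖x n - xbar‖ ^ 2 + 2 * (1 - β n) * ⟪-xbar, w n - xbar⟫ := by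
        field_simp
        ring
      rw [hfinal]
      linarith
    · intro hsum
      refine hβdiv (hsum.of_nonneg_of_le (fun n => by linarith [(hβ n).2]) (fun n => ?_))
      show 1 - β n ≤ (1 - β n) * (1 + β n)
      nlinarith [(hβ n).1, (hβ n).2]
    · intro ε hε
      refine (hlimsupIneq (ε/2) (by positivity)).mono fun n hn => ?_
      have h1β : (0:ℝ) < 1 + β n := by linarith [(hβ n).1]
      rcases le_or_gt 0 (⟪-xbar, w n - xbar⟫) with h | h
      · have hd : 2 * ⟪-xbar, w n - xbar⟫ / (1 + β n) ≤ 2 * ⟪-xbar, w n - xbar⟫ :=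
          div_le_self (by positivity) (by linarith [(hβ n).1])
        linarith
      · have hd : 2 * ⟪-xbar, w n - xbar⟫ / (1 + β n) ≤ 0 :=
          div_nonpos_of_nonpos_of_nonneg (by linarith) h1β.le
        linarith
    · exact fun n => le_refl 0
    · exact summable_zero
  have hxnorm : Tendsto (fun n => ‖x n - xbar‖) atTop (nhds 0) := by
    have := hxsq.sqrt
    simpa [Real.sqrt_sq (norm_nonneg _)] using this
  have hxconv : Tendsto x atTop (nhds xbar) :=
    tendsto_iff_norm_sub_tendsto_zero.2 hxnorm
  have hwconv : Tendsto (fun n => w n - xbar) atTop (nhds 0) := by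
    have h1 : Tendsto w atTop (nhds xbar) := by
      have := hβlim.smul hxconv
      simpa using this
    simpa using h1.sub_const xbar
  have hwnorm : Tendsto (fun n => ‖w n - xbar‖) atTop (nhds 0) := by
    simpa using hwconv.norm
  have hyconv : Tendsto y atTop (nhds (JB xbar)) := by
    rw [tendsto_iff_norm_sub_tendsto_zero]
    refine squeeze_zero (fun n => norm_nonneg _) (fun n => ?_) hwnorm
    rw [hy n]
    exact hJBne _ _
  have hzconv : Tendsto z atTop (nhds (JB xbar)) := by
    rw [tendsto_iff_norm_sub_tendsto_zero]
    refine squeeze_zero (fun n => norm_nonneg _) (fun n => ?_) hwnorm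
    have hzn : z n = JA (RB (w n)) := by rw [hz n, hy n]
    rw [hzn, ← hJAp]
    exact (hJAne _ _).trans (hRBne _ _)
  exact ⟨hxconv, hyconv, hzconv, hzer⟩
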